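/- Let k, d be positive integers and write d ≡ r (mod k) with 0 ≤ r ≤ k−1. There exists n₀ = n₀(d,k) such that for every n ≥ n₀, any k-wise (n−d)-union family 𝒜 of subsets of [n] with |𝒜| = 2^r · Σ_{i=0}^{⌊d/k⌋} C(n−r, i) equals, up to a permutation of the ground set [n], the family 𝒜_{r,⌊d/k⌋} = {S ⊆ [n] : |S ∩ [n−r]| ≤ ⌊d/k⌋}. -/

import Mathlib

/-- A set `Y` is shattered by the family `F` if every subset of `Y`
is the trace of some member of `F` on `Y`. -/
def Shatters {α : Type*} [DecidableEq α] (F : Finset (Finset α)) (Y : Finset α) : Prop :=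
  ∀ T ⊆ Y, ∃ S ∈ F, S ∩ Y = T

/-- The VC dimension of a family: the largest cardinality of a shattered set. -/
noncomputable def vcDim {α : Type*} [DecidableEq α] (F : Finset (Finset α)) : ℕ :=
  sSup {m | ∃ Y : Finset α, Shatters F Y ∧ Y.card = m}

/-- `S₁ △ S₂ △ ⋯ △ S_k` for a `k`-tuple of sets. -/
def symmDiffAll {α : Type*} [DecidableEq α] {k : ℕ} (f : Fin k → Finset α) : Finset α :=
  (List.ofFn f).foldr symmDiff ∅

/-- The `k`-fold symmetric difference family `△𝒜^k`. -/
def symmDiffFam {α : Type*} [DecidableEq α] (k : ℕ) (A : Finset (Finset α)) :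
    Finset (Finset α) :=
  (Fintype.piFinset fun _ : Fin k => A).image symmDiffAll

/-- The family `𝒜₁ △ ⋯ △ 𝒜ₖ`. -/
def symmDiffFamMulti {α : Type*} [DecidableEq α] {k : ℕ} (A : Fin k → Finset (Finset α)) :
    Finset (Finset α) :=
  (Fintype.piFinset A).image symmDiffAll

/-- A family is `k`-wise `(n-d)`-union if any `k` of its members have union of size `≤ d`. -/
def KwiseUnion {α : Type*} [DecidableEq α] (k d : ℕ) (A : Finset (Finset α)) : Prop :=
  ∀ f : Fin k → Finset α, (∀ i, f i ∈ A) → (Finset.univ.sup f).card ≤ d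

/-- The `i`-compression of a family. -/
def compress {α : Type*} [DecidableEq α] (i : α) (A : Finset (Finset α)) :
    Finset (Finset α) :=
  A.image fun S => if S ∈ A ∧ S.erase i ∈ A then S else S.erase i

/-- The `(i,j)`-shift of a family. -/
def shiftIJ {α : Type*} [DecidableEq α] (i j : α) (A : Finset (Finset α)) :
    Finset (Finset α) :=
  A.image fun S => if i ∉ S ∧ j ∈ S ∧ insert i (S.erase j) ∉ A then insert i (S.erase j) else S

/-- `p(n,k,d)`: the maximum size of a `k`-wise `(n-d)`-union family on `[n]`. -/
noncomputable def pMax (n k d : ℕ) : ℕ :=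
  sSup {m | ∃ F : Finset (Finset (Fin n)), KwiseUnion k d F ∧ F.card = m}


open Finset

section Aux
set_option linter.unusedSectionVars false

variable {α : Type*} [Fintype α] [DecidableEq α]

lemma powerset_filter_card_lt_card (s : Finset α) (m : ℕ) :
    ((s.powerset.filter fun T => T.card < m)).card = ∑ j ∈ range m, s.card.choose j := by
  rw [card_eq_sum_card_fiberwise (f := fun T => T.card) (t := range m)
    (fun T hT => by simp only [mem_coe, mem_filter] at hT; exact mem_range.2 hT.2)]
  refine Finset.sum_congr rfl fun j hj => ?_
  rw [mem_range] at hj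
  rw [← Finset.card_powersetCard j s, Finset.powersetCard_eq_filter]
  congr 1
  ext T
  simp only [mem_filter, mem_powerset]
  constructor
  · rintro ⟨⟨h1, _⟩, h3⟩; exact ⟨h1, h3⟩
  · rintro ⟨h1, h2⟩; exact ⟨⟨h1, h2 ▸ hj⟩, h2⟩

lemma powerset_filter_card_le_card (s : Finset α) (i : ℕ) :
    ((s.powerset.filter fun T => T.card ≤ i)).card = ∑ j ∈ range (i+1), s.card.choose j := by
  rw [← powerset_filter_card_lt_card s (i+1)]
  congr 1
  ext T
  simp [Nat.lt_succ_iff]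

lemma exists_large_new (B : Finset (Finset α)) (X : Finset α) (m : ℕ)
    (h : 2 ^ X.card * ∑ j ∈ range m, (Fintype.card α).choose j < B.card) :
    ∃ S ∈ B, m ≤ (S \ X).card := by
  by_contra hc
  push_neg at hc
  have hinj : ∀ S ∈ B, (S ∩ X, S \ X) ∈
      X.powerset ×ˢ ((univ : Finset α).powerset.filter fun T => T.card < m) := by
    intro S hS
    simp only [mem_product, mem_powerset, mem_filter]
    exact ⟨inter_subset_right, subset_univ _, hc S hS⟩
  have hcard := Finset.card_le_card_of_injOn _ hinj (fun S hS S' hS' hEq => by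
    simp only [Prod.mk.injEq] at hEq
    have : S \ X ∪ S ∩ X = S' \ X ∪ S' ∩ X := by rw [hEq.1, hEq.2]
    rwa [Finset.sdiff_union_inter, Finset.sdiff_union_inter] at this)
  rw [Finset.card_product, Finset.card_powerset,
    powerset_filter_card_lt_card, card_univ] at hcard
  omega

lemma card_ball (R : Finset α) (i : ℕ) :
    (univ.filter fun S : Finset α => (S \ R).card ≤ i).card
      = 2 ^ R.card * ∑ j ∈ range (i+1), (Fintype.card α - R.card).choose j := by
  have hc : (univ \ R).card = Fintype.card α - R.card := by
    rw [Finset.card_sdiff_of_subset (subset_univ R), card_univ]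
  rw [← hc, ← Finset.card_powerset, ← powerset_filter_card_le_card, ← Finset.card_product]
  apply Finset.card_bij' (fun S _ => (S ∩ R, S \ R)) (fun p _ => p.1 ∪ p.2)
  · intro S hS
    simp only [mem_filter, mem_univ, true_and] at hS
    simp only [mem_product, mem_powerset, mem_filter]
    refine ⟨inter_subset_right, ⟨?_, hS⟩⟩
    exact subset_sdiff.2 ⟨subset_univ _, disjoint_sdiff_self_left⟩
  · intro p hp
    simp only [mem_product, mem_powerset, mem_filter] at hp
    simp only [mem_filter, mem_univ, true_and]
    have hdisj : Disjoint p.2 R := (subset_sdiff.1 hp.2.1).2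
    have : (p.1 ∪ p.2) \ R = p.2 \ R := by
      rw [Finset.union_sdiff_distrib, Finset.sdiff_eq_empty_iff_subset.2 hp.1, Finset.empty_union]
    rw [this, Finset.sdiff_eq_self_of_disjoint hdisj]
    exact hp.2.2
  · intro S hS
    rw [Finset.union_comm, Finset.sdiff_union_inter]
  · intro p hp
    simp only [mem_product, mem_powerset, mem_filter] at hp
    have hdisj : Disjoint p.2 R := (subset_sdiff.1 hp.2.1).2
    have h1 : (p.1 ∪ p.2) ∩ R = p.1 := by
      rw [Finset.union_inter_distrib_right, (Finset.inter_eq_left).2 hp.1,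
        (Finset.disjoint_iff_inter_eq_empty.1 hdisj), Finset.union_empty]
    have h2 : (p.1 ∪ p.2) \ R = p.2 := by
      rw [Finset.union_sdiff_distrib, Finset.sdiff_eq_empty_iff_subset.2 hp.1,
        Finset.empty_union, Finset.sdiff_eq_self_of_disjoint hdisj]
    rw [h1, h2]


lemma sum_range_choose_le (n m : ℕ) (hn : 1 ≤ n) :
    ∑ j ∈ range m, n.choose j ≤ m * n^(m-1) := by
  calc ∑ j ∈ range m, n.choose j ≤ ∑ j ∈ range m, n^(m-1) := by
        apply Finset.sum_le_sum
        intro j hj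
        calc n.choose j ≤ n ^ j := Nat.choose_le_pow n j
          _ ≤ n ^ (m-1) := Nat.pow_le_pow_right hn (by rw [Finset.mem_range] at hj; omega)
    _ = m * n^(m-1) := by simp [mul_comm]

lemma choose_le_sub_add (n r i : ℕ) :
    n.choose i ≤ (n-r).choose i + r * n.choose (i-1) := by
  induction r with
  | zero => simp
  | succ r ih =>
    refine ih.trans ?_
    have key : (n-r).choose i ≤ (n-(r+1)).choose i + n.choose (i-1) := by
      rcases i with _ | j
      · simp
      · rcases h : n - r with _ | m
        · simp [Nat.choose_zero_succ]
        · have h2 : n - (r+1) = m := by omega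
          have h3 : m ≤ n := by omega
          rw [h2]
          have hp : (m+1).choose (j+1) = m.choose j + m.choose (j+1) :=
            Nat.choose_succ_succ' m j
          have hmono : m.choose j ≤ n.choose j := Nat.choose_le_choose j h3
          have hred : (j + 1) - 1 = j := rfl
          rw [hred]
          omega
    have hexp : (r+1) * n.choose (i-1) = r * n.choose (i-1) + n.choose (i-1) := by ring
    omega

lemma core_num (c r i : ℕ) (hi : 1 ≤ i) (n : ℕ)
    (h1 : 2*(r+i) ≤ n) (h2 : 2^i * c * i.factorial < n) :
    c * n^(i-1) < (n-r).choose i := by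
  have hn1 : 1 ≤ n := by omega
  have hd : (n - r + 1 - i)^i ≤ i.factorial * (n-r).choose i := by
    rw [← Nat.descFactorial_eq_factorial_mul_choose]
    exact Nat.pow_sub_le_descFactorial (n-r) i
  have hhalf : n ≤ 2 * (n - r + 1 - i) := by omega
  have hpow : n ^ i ≤ 2^i * ((n - r + 1 - i)^i) := by
    calc n ^ i ≤ (2 * (n - r + 1 - i))^i := Nat.pow_le_pow_left hhalf i
      _ = 2^i * ((n - r + 1 - i)^i) := by rw [mul_pow]
  have hkey : 2^i * i.factorial * (c * n^(i-1)) < 2^i * i.factorial * ((n-r).choose i) := by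
    calc 2^i * i.factorial * (c * n^(i-1)) = (2^i * c * i.factorial) * n^(i-1) := by ring
      _ < n * n^(i-1) := by
          apply Nat.mul_lt_mul_of_lt_of_le h2 (le_refl _)
          positivity
      _ = n ^ i := by
          rw [← pow_succ']
          congr 1
          omega
      _ ≤ 2^i * ((n - r + 1 - i)^i) := hpow
      _ ≤ 2^i * (i.factorial * (n-r).choose i) := Nat.mul_le_mul_left _ hd
      _ = 2^i * i.factorial * ((n-r).choose i) := by ring
  exact Nat.lt_of_mul_lt_mul_left hkey


variable {n k d : ℕ}

lemma hsize_lemma (hk : 0 < k) {A : Finset (Finset (Fin n))} (hA : KwiseUnion k d A) :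
    ∀ S ∈ A, S.card ≤ d := by
  haveI : NeZero k := ⟨hk.ne'⟩
  intro S hS
  have := hA (fun _ => S) (fun _ => hS)
  rwa [Finset.sup_const Finset.univ_nonempty] at this

lemma sup_univ_cons' {m : ℕ} {β : Type*} [SemilatticeSup β] [OrderBot β]
    (a : β) (f : Fin m → β) :
    Finset.univ.sup (Fin.cons a f : Fin (m+1) → β) = a ⊔ Finset.univ.sup f := by
  rw [Fin.univ_succ, Finset.sup_cons, Finset.sup_map]
  rfl

lemma card_sup_le' {α : Type*} [DecidableEq α] {m : ℕ} (f : Fin m → Finset α) (d : ℕ)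
    (h : ∀ t, (f t).card ≤ d) :
    (Finset.univ.sup f).card ≤ m * d := by
  rw [Finset.sup_eq_biUnion]
  calc (Finset.univ.biUnion f).card ≤ ∑ t : Fin m, (f t).card := Finset.card_biUnion_le
    _ ≤ ∑ _t : Fin m, d := Finset.sum_le_sum fun t _ => h t
    _ = m * d := by simp [mul_comm]

/-- Kernel extraction: a bounded set `W` such that every member has ≤ d/k elements outside `W`. -/
lemma exists_kernel_W (hk : 0 < k) {A : Finset (Finset (Fin n))} (hA : KwiseUnion k d A) :
    ∃ W : Finset (Fin n), W.card ≤ (k-1)*d ∧ ∀ S ∈ A, (S \ W).card ≤ d/k := by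
  classical
  have hsize := hsize_lemma hk hA
  set i := d / k with hidef
  have hdki : k * i + d % k = d := Nat.div_add_mod d k
  have hrk : d % k < k := Nat.mod_lt _ hk
  set P : ℕ → Prop := fun ℓ => ∃ f : Fin ℓ → Finset (Fin n),
    (∀ t, f t ∈ A) ∧ ℓ * (i+1) ≤ (Finset.univ.sup f).card with hPdef
  have hP0 : P 0 := ⟨Fin.elim0, fun t => t.elim0, by simp⟩
  have hPk : ¬ P k := by
    rintro ⟨f, hf1, hf2⟩
    have := hA f hf1
    have hgt : d < k * (i+1) := by
      have : k * (i+1) = k*i + k := by ring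
      omega
    omega
  set m := Nat.findGreatest P (k-1) with hmdef
  have hmle : m ≤ k - 1 := Nat.findGreatest_le _
  have hPm : P m := Nat.findGreatest_spec (Nat.zero_le _) hP0
  obtain ⟨f, hf1, hf2⟩ := hPm
  refine ⟨Finset.univ.sup f, ?_, ?_⟩
  · calc (Finset.univ.sup f).card ≤ m * d := card_sup_le' f d (fun t => hsize _ (hf1 t))
      _ ≤ (k-1) * d := Nat.mul_le_mul_right d hmle
  · intro S hS
    by_contra hbad
    push_neg at hbad
    have hPm1 : P (m+1) := by
      refine ⟨Fin.cons S f, ?_, ?_⟩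
      · intro t
        refine Fin.cases ?_ ?_ t
        · rw [Fin.cons_zero]; exact hS
        · intro j; rw [Fin.cons_succ]; exact hf1 j
      · rw [sup_univ_cons', Finset.sup_eq_union]
        have hcu : (S \ Finset.univ.sup f).card + (Finset.univ.sup f).card
            = (S ∪ Finset.univ.sup f).card := Finset.card_sdiff_add_card S _
        have : (m+1)*(i+1) = m*(i+1) + (i+1) := by ring
        omega
    rcases le_or_gt (m+1) (k-1) with hle | hlt
    · exact Nat.findGreatest_is_greatest (by omega) hle hPm1
    · have : m + 1 = k := by omega
      rw [this] at hPm1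
      exact hPk hPm1



end Aux

/-- for positive `k, d` with `r = d % k`, there is `n₀(d,k)` such that for
`n ≥ n₀` any `k`-wise `(n−d)`-union family on `[n]` of size `2^r · ∑_{i=0}^{⌊d/k⌋} C(n−r,i)`
equals, up to a permutation of `[n]`, the family `𝒜_{r,⌊d/k⌋} = {S : |S ∩ [n−r]| ≤ ⌊d/k⌋}`. -/
theorem statement11 (k d : ℕ) (hk : 0 < k) (hd : 0 < d) :
    ∃ n₀ : ℕ, ∀ n : ℕ, n₀ ≤ n → ∀ A : Finset (Finset (Fin n)),
      KwiseUnion k d A →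
      A.card = 2 ^ (d % k) * ∑ i ∈ Finset.range (d / k + 1), (n - d % k).choose i →
      ∃ σ : Equiv.Perm (Fin n),
        A.image (fun S => S.image σ) =
          Finset.univ.filter
            (fun S : Finset (Fin n) =>
              (S.filter fun x : Fin n => (x : ℕ) < n - d % k).card ≤ d / k) := by
  classical
  obtain ⟨k', rfl⟩ : ∃ k', k = k' + 1 := ⟨k - 1, (Nat.succ_pred_eq_of_pos hk).symm⟩
  set k := k' + 1 with hkdef
  set i := d / k with hidef
  set r := d % k with hrdef
  have hrk : r < k := Nat.mod_lt _ hk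
  have hdki : k * i + r = d := Nat.div_add_mod d k
  have hid : i ≤ d := Nat.div_le_self d k
  have hrd : r ≤ d := Nat.mod_le d k
  set c₅ := 2^((3*k+2)*(d+1)) * (d+2)^2 with hc5def
  refine ⟨2*(r+i) + (2^i * c₅ * i.factorial + 1) + d + k + r + 3, ?_⟩
  intro n hn A hA hcard
  have h2a : 2*(r+i) ≤ n := by omega
  have h2b : 2^i * c₅ * i.factorial < n := by omega
  have hn1 : d + k + r + 2 ≤ n := by omega
  have hsize := hsize_lemma hk hA
  -- the kernel W
  obtain ⟨W, hW1, hW2⟩ := exists_kernel_W hk hA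
  -- fibers over traces on W
  set AZ : Finset (Fin n) → Finset (Finset (Fin n)) :=
    fun Z => A.filter (fun S => S ∩ W = Z) with hAZdef
  set TH := 2 ^ ((2*k+1)*d) * ∑ j ∈ range i, n.choose j with hTHdef
  set bigs := W.powerset.filter (fun Z => TH < (AZ Z).card) with hbigsdef
  set R := bigs.sup id with hRdef
  have hpart : A.card = ∑ Z ∈ W.powerset, (AZ Z).card :=
    Finset.card_eq_sum_card_fiberwise
      (fun S _ => Finset.mem_powerset.2 inter_subset_right)
  have hAZle : ∀ Z, (AZ Z).card ≤ ∑ j ∈ range (i+1), n.choose j := by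
    intro Z
    have hmap : ∀ S ∈ AZ Z,
        S \ W ∈ (Finset.univ : Finset (Fin n)).powerset.filter (fun T => T.card ≤ i) := by
      intro S hS
      rw [Finset.mem_filter, Finset.mem_powerset]
      exact ⟨Finset.subset_univ _, hW2 S (Finset.mem_filter.1 hS).1⟩
    have hinj : Set.InjOn (fun S => S \ W) (AZ Z) := by
      intro S hS S' hS' hEq
      have h1 : S ∩ W = Z := (Finset.mem_filter.1 (Finset.mem_coe.1 hS)).2
      have h2 : S' ∩ W = Z := (Finset.mem_filter.1 (Finset.mem_coe.1 hS')).2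
      have : S \ W ∪ S ∩ W = S' \ W ∪ S' ∩ W := by
        rw [h1, h2]; dsimp only at hEq; rw [hEq]
      rwa [Finset.sdiff_union_inter, Finset.sdiff_union_inter] at this
    have := Finset.card_le_card_of_injOn _ hmap hinj
    rwa [powerset_filter_card_le_card, Finset.card_univ, Fintype.card_fin] at this
  have greedy : ∀ Z X, Z ∈ bigs → X.card ≤ (2*k+1)*d → ∃ S ∈ AZ Z, i ≤ (S \ X).card := by
    intro Z X hZ hX
    apply exists_large_new
    have hth : 2 ^ X.card * ∑ j ∈ range i, (Fintype.card (Fin n)).choose j ≤ TH := by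
      rw [Fintype.card_fin]
      exact Nat.mul_le_mul_right _ (Nat.pow_le_pow_right (by norm_num) hX)
    exact lt_of_le_of_lt hth (Finset.mem_filter.1 hZ).2
  have chain : ∀ m : ℕ, m ≤ k → ∀ g : Fin m → Finset (Fin n), (∀ t, g t ∈ bigs) →
      ∀ X₀ : Finset (Fin n), X₀.card ≤ (k+1)*d →
      ∃ f : Fin m → Finset (Fin n), (∀ t, f t ∈ A ∧ f t ∩ W = g t) ∧
        m * i ≤ ((Finset.univ.sup f) \ X₀).card := by
    intro m
    induction m with
    | zero =>
      intro _ g _ X₀ _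
      exact ⟨Fin.elim0, fun t => t.elim0, by simp⟩
    | succ m ih =>
      intro hm g hg X₀ hX₀
      obtain ⟨f', hf'1, hf'2⟩ := ih (by omega) (fun t => g t.succ) (fun t => hg t.succ) X₀ hX₀
      have hsupf' : (Finset.univ.sup f').card ≤ m * d :=
        card_sup_le' f' d (fun t => hsize _ (hf'1 t).1)
      set X := X₀ ∪ Finset.univ.sup f' with hXdef
      have hXcard : X.card ≤ (2*k+1)*d := by
        rw [hXdef]
        have h1 := Finset.card_union_le X₀ (Finset.univ.sup f')
        have h2 : m * d ≤ k * d := Nat.mul_le_mul_right d (by omega)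
        have h3 : (k+1)*d + k*d = (2*k+1)*d := by ring
        omega
      obtain ⟨S, hSmem, hSnew⟩ := greedy (g 0) X (hg 0) hXcard
      have hSA : S ∈ A ∧ S ∩ W = g 0 := by
        have := Finset.mem_filter.1 hSmem
        exact ⟨this.1, this.2⟩
      refine ⟨Fin.cons S f', fun t => ?_, ?_⟩
      · refine Fin.cases ?_ ?_ t
        · rw [Fin.cons_zero]; exact hSA
        · intro j; rw [Fin.cons_succ]; exact hf'1 j
      · rw [sup_univ_cons', Finset.sup_eq_union]
        have hsub1 : (Finset.univ.sup f') \ X₀ ⊆ (S ∪ Finset.univ.sup f') \ X₀ :=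
          Finset.sdiff_subset_sdiff Finset.subset_union_right (le_refl _)
        have hsub2 : S \ X ⊆ (S ∪ Finset.univ.sup f') \ X₀ := by
          intro x hx
          rw [Finset.mem_sdiff] at hx ⊢
          exact ⟨Finset.mem_union_left _ hx.1, fun h0 => hx.2 (Finset.mem_union_left _ h0)⟩
        have hdisj : Disjoint ((Finset.univ.sup f') \ X₀) (S \ X) := by
          apply Finset.disjoint_left.2
          intro x hx1 hx2
          rw [Finset.mem_sdiff] at hx1 hx2
          exact hx2.2 (Finset.mem_union_right _ hx1.1)
        have hle := Finset.card_le_card (Finset.union_subset hsub1 hsub2)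
        rw [Finset.card_union_of_disjoint hdisj] at hle
        have hmul : (m+1)*i = m*i + i := by ring
        omega
  -- numeric facts
  have hSRge : (n-r).choose i ≤ ∑ j ∈ range (i+1), (n-r).choose j :=
    Finset.single_le_sum (fun j _ => Nat.zero_le _) (self_mem_range_succ i)
  have hcore : ∀ c, c ≤ c₅ → 1 ≤ i → c * n^(i-1) < (n-r).choose i := by
    intro c hc hi1
    refine core_num c r i hi1 n h2a ?_
    have : 2^i * c * i.factorial ≤ 2^i * c₅ * i.factorial :=
      Nat.mul_le_mul_right _ (Nat.mul_le_mul_left _ hc)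
    omega
  have hpow3 : 2^((k-1)*d) * 2^((2*k+1)*d) = 2^((k-1)*d + (2*k+1)*d) := (pow_add 2 _ _).symm
  have hcoef : ∀ c₆ : ℕ, c₆ = 2^((k-1)*d + (2*k+1)*d) * i → c₆ ≤ c₅ := by
    intro c₆ hc₆
    rw [hc₆, hc5def]
    have he1 : (k-1)*d + (2*k+1)*d ≤ (3*k+2)*(d+1) := by
      have h1 : (k-1)*d ≤ k*d := Nat.mul_le_mul_right d (by omega)
      have h2 : k*d + (2*k+1)*d = (3*k+1)*d := by ring
      have h3 : (3*k+1)*d ≤ (3*k+2)*(d+1) :=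
        Nat.mul_le_mul (by omega) (by omega)
      omega
    have he2 : i ≤ (d+2)^2 := by
      have : (d+2)^2 = d*d + 4*d + 4 := by ring
      omega
    exact Nat.mul_le_mul (Nat.pow_le_pow_right (by norm_num) he1) he2
  have hE : 2^((k-1)*d) * TH < A.card := by
    rw [hcard, hTHdef, ← mul_assoc, hpow3]
    rcases Nat.eq_zero_or_pos i with hi0 | hi1
    · rw [hi0]
      simp only [Finset.range_zero, Finset.sum_empty, Nat.mul_zero]
      have : 0 < ∑ j ∈ range (0+1), (n-r).choose j := by simp
      positivity
    · calc 2^((k-1)*d + (2*k+1)*d) * ∑ j ∈ range i, n.choose j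
          ≤ 2^((k-1)*d + (2*k+1)*d) * (i * n^(i-1)) :=
            Nat.mul_le_mul_left _ (sum_range_choose_le n i (by omega))
        _ = (2^((k-1)*d + (2*k+1)*d) * i) * n^(i-1) := by ring
        _ < (n-r).choose i := hcore _ (hcoef _ rfl) hi1
        _ ≤ ∑ j ∈ range (i+1), (n-r).choose j := hSRge
        _ ≤ 2^r * ∑ j ∈ range (i+1), (n-r).choose j :=
            Nat.le_mul_of_pos_left _ (Nat.two_pow_pos r)
  have hbig_ex : bigs.Nonempty := by
    by_contra hemp
    rw [Finset.not_nonempty_iff_eq_empty] at hemp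
    have hle : A.card ≤ 2^((k-1)*d) * TH := by
      rw [hpart]
      have hb : ∀ Z ∈ W.powerset, (AZ Z).card ≤ TH := by
        intro Z hZ
        by_contra hgt
        push_neg at hgt
        have : Z ∈ bigs := Finset.mem_filter.2 ⟨hZ, hgt⟩
        rw [hemp] at this
        exact absurd this (Finset.notMem_empty Z)
      calc ∑ Z ∈ W.powerset, (AZ Z).card ≤ W.powerset.card * TH :=
            Finset.sum_le_card_nsmul _ _ _ hb
        _ ≤ 2^((k-1)*d) * TH := by
            rw [Finset.card_powerset]
            exact Nat.mul_le_mul_right _ (Nat.pow_le_pow_right (by norm_num) hW1)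
    omega
  have hRW : R ⊆ W := by
    have h : R ≤ W := Finset.sup_le (fun Z hZ => by
      simpa using Finset.mem_powerset.1 (Finset.mem_filter.1 hZ).1)
    exact h
  have cover : ∀ x ∈ R, ∃ Z, Z ∈ bigs ∧ x ∈ Z := by
    intro x hx
    obtain ⟨Z, hZ1, hZ2⟩ := Finset.mem_sup.1 hx
    exact ⟨Z, hZ1, hZ2⟩
  obtain ⟨fZ, hfZ⟩ : ∃ fZ : Fin n → Finset (Fin n), ∀ x ∈ R, fZ x ∈ bigs ∧ x ∈ fZ x := by
    refine ⟨fun x => if hx : x ∈ R then (cover x hx).choose else ∅, fun x hx => ?_⟩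
    dsimp only
    rw [dif_pos hx]
    exact ⟨(cover x hx).choose_spec.1, (cover x hx).choose_spec.2⟩
  have hU : ∀ g : Fin k → Finset (Fin n), (∀ t, g t ∈ bigs) →
      (Finset.univ.sup g).card ≤ r := by
    intro g hg
    obtain ⟨f, hf1, hf2⟩ := chain k (le_refl k) g hg W
      (hW1.trans (Nat.mul_le_mul_right d (by omega)))
    have hsupd : (Finset.univ.sup f).card ≤ d := hA f (fun t => (hf1 t).1)
    have hint : (Finset.univ.sup f) ∩ W = Finset.univ.sup g := by
      have hdist : (Finset.univ.sup f) ⊓ W = Finset.univ.sup (fun t => f t ⊓ W) :=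
        Finset.sup_inf_distrib_right _ _ _
      rw [← Finset.inf_eq_inter]
      rw [hdist]
      exact Finset.sup_congr rfl (fun t _ => by rw [Finset.inf_eq_inter]; exact (hf1 t).2)
    have hc := Finset.card_inter_add_card_sdiff (Finset.univ.sup f) W
    rw [hint] at hc
    omega
  have hRr : R.card ≤ r := by
    by_contra hcon
    push_neg at hcon
    obtain ⟨R', hR'sub, hR'card⟩ := Finset.exists_subset_card_eq (show r+1 ≤ R.card by omega)
    obtain ⟨Z₀, hZ₀⟩ := hbig_ex
    set e := Finset.equivFinOfCardEq hR'card with hedef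
    set g : Fin k → Finset (Fin n) := fun t =>
      if h : (t:ℕ) < r+1 then fZ ↑(e.symm ⟨t, h⟩) else Z₀ with hgdef
    have hg : ∀ t, g t ∈ bigs := by
      intro t
      rw [hgdef]
      dsimp only
      split_ifs with h
      · exact (hfZ _ (hR'sub (e.symm ⟨t, h⟩).2)).1
      · exact hZ₀
    have hsub : R' ⊆ Finset.univ.sup g := by
      intro x hx
      set t₀ := e ⟨x, hx⟩ with ht₀def
      have ht₀2 : (t₀ : ℕ) < r + 1 := t₀.2
      have hkk : (t₀ : ℕ) < k := by omega
      have hmem : x ∈ g ⟨t₀, hkk⟩ := by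
        rw [hgdef]
        dsimp only
        rw [dif_pos (show ((⟨(t₀:ℕ), hkk⟩ : Fin k) : ℕ) < r+1 from ht₀2)]
        have hfix : (⟨((⟨(t₀:ℕ), hkk⟩ : Fin k) : ℕ), ht₀2⟩ : Fin (r+1)) = t₀ := Fin.ext rfl
        rw [hfix, ht₀def, Equiv.symm_apply_apply]
        exact (hfZ x (hR'sub hx)).2
      have hsubg : g ⟨(t₀:ℕ), hkk⟩ ⊆ Finset.univ.sup g :=
        Finset.le_sup (Finset.mem_univ _)
      exact hsubg hmem
    have h1 := Finset.card_le_card hsub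
    have h2 := hU g hg
    omega
  have hRr2 : R.card = r := by
    by_contra hne
    have hlt : R.card < r := lt_of_le_of_ne hRr hne
    have hr1 : 1 ≤ r := by omega
    have hsplit : A.card ≤ 2^(r-1) * ∑ j ∈ range (i+1), n.choose j
        + 2^((k-1)*d) * TH := by
      rw [hpart, ← Finset.sum_filter_add_sum_filter_not W.powerset
        (fun Z => TH < (AZ Z).card)]
      have hb1 : ∑ Z ∈ W.powerset.filter (fun Z => TH < (AZ Z).card), (AZ Z).card
          ≤ 2^(r-1) * ∑ j ∈ range (i+1), n.choose j := by
        have hss : bigs ⊆ R.powerset := by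
          intro Z hZ
          rw [Finset.mem_powerset]
          exact (Finset.le_sup (f := id) hZ : id Z ≤ R)
        have hcb : bigs.card ≤ 2^(r-1) := by
          calc bigs.card ≤ R.powerset.card := Finset.card_le_card hss
            _ = 2^R.card := Finset.card_powerset R
            _ ≤ 2^(r-1) := Nat.pow_le_pow_right (by norm_num) (by omega)
        calc ∑ Z ∈ bigs, (AZ Z).card
            ≤ bigs.card * ∑ j ∈ range (i+1), n.choose j :=
              Finset.sum_le_card_nsmul _ _ _ (fun Z _ => hAZle Z)
          _ ≤ 2^(r-1) * ∑ j ∈ range (i+1), n.choose j :=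
              Nat.mul_le_mul_right _ hcb
      have hb2 : ∑ Z ∈ W.powerset.filter (fun Z => ¬ TH < (AZ Z).card), (AZ Z).card
          ≤ 2^((k-1)*d) * TH := by
        calc ∑ Z ∈ W.powerset.filter (fun Z => ¬ TH < (AZ Z).card), (AZ Z).card
            ≤ (W.powerset.filter (fun Z => ¬ TH < (AZ Z).card)).card * TH :=
              Finset.sum_le_card_nsmul _ _ _ (fun Z hZ => by
                have := (Finset.mem_filter.1 hZ).2
                omega)
          _ ≤ 2^((k-1)*d) * TH := by
              apply Nat.mul_le_mul_right
              calc (W.powerset.filter (fun Z => ¬ TH < (AZ Z).card)).card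
                  ≤ W.powerset.card := Finset.card_le_card (Finset.filter_subset _ _)
                _ = 2^W.card := Finset.card_powerset W
                _ ≤ 2^((k-1)*d) := Nat.pow_le_pow_right (by norm_num) hW1
      omega
    have hnum : 2^(r-1) * ∑ j ∈ range (i+1), n.choose j + 2^((k-1)*d) * TH
        < A.card := by
      rw [hcard, hTHdef, ← mul_assoc, hpow3]
      rcases Nat.eq_zero_or_pos i with hi0 | hi1
      · rw [hi0]
        simp only [Finset.range_zero, Finset.sum_empty, Nat.mul_zero, Nat.add_zero,
          Nat.zero_add, Finset.sum_range_one, Nat.choose_zero_right, Nat.mul_one]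
        have hh : 2^r = 2^(r-1) * 2 := by
          rw [← pow_succ]
          congr 1
          omega
        have := Nat.one_le_two_pow (n := r-1)
        omega
      · -- i ≥ 1
        have hSB : ∑ j ∈ range (i+1), n.choose j
            = ∑ j ∈ range i, n.choose j + n.choose i := Finset.sum_range_succ _ i
        have hSL : ∑ j ∈ range i, n.choose j ≤ i * n^(i-1) :=
          sum_range_choose_le n i (by omega)
        have hCC : n.choose i ≤ (n-r).choose i + r * n^(i-1) := by
          refine (choose_le_sub_add n r i).trans ?_
          exact Nat.add_le_add_left (Nat.mul_le_mul_left r (Nat.choose_le_pow n (i-1))) _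
        set a := (n-r).choose i with hadef
        set X := n^(i-1) with hXdef
        set E1 := (k-1)*d + (2*k+1)*d with hE1def
        have hc₇ : (2^(r-1)*i + 2^(r-1)*r + 2^E1*i) ≤ c₅ := by
          rw [hc5def]
          have hb1 : 2^(r-1) ≤ 2^((3*k+2)*(d+1)) :=
            Nat.pow_le_pow_right (by norm_num) (by
              have : (3*k+2)*(d+1) = 3*k*d + 3*k + 2*d + 2 := by ring
              omega)
          have hb2 : 2^E1 ≤ 2^((3*k+2)*(d+1)) :=
            Nat.pow_le_pow_right (by norm_num) (by
              rw [hE1def]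
              have h1 : (k-1)*d ≤ k*d := Nat.mul_le_mul_right d (by omega)
              have h2 : k*d + (2*k+1)*d = (3*k+1)*d := by ring
              have h3 : (3*k+1)*d ≤ (3*k+2)*(d+1) := Nat.mul_le_mul (by omega) (by omega)
              omega)
          have hsq : (d+2)^2 = d*d + 4*d + 4 := by ring
          have hi2 : i ≤ d := hid
          have hr2 : r ≤ d := hrd
          calc 2^(r-1)*i + 2^(r-1)*r + 2^E1*i
              ≤ 2^((3*k+2)*(d+1))*d + 2^((3*k+2)*(d+1))*d + 2^((3*k+2)*(d+1))*d := by
                have g1 : 2^(r-1)*i ≤ 2^((3*k+2)*(d+1))*d := Nat.mul_le_mul hb1 hi2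
                have g2 : 2^(r-1)*r ≤ 2^((3*k+2)*(d+1))*d := Nat.mul_le_mul hb1 hr2
                have g3 : 2^E1*i ≤ 2^((3*k+2)*(d+1))*d := Nat.mul_le_mul hb2 hi2
                omega
            _ = 2^((3*k+2)*(d+1)) * (3*d) := by ring
            _ ≤ 2^((3*k+2)*(d+1)) * (d+2)^2 := by
                apply Nat.mul_le_mul_left
                omega
        have hlast : (2^(r-1)*i + 2^(r-1)*r + 2^E1*i) * X < a := hcore _ hc₇ hi1
        have hfin : 2^(r-1) * (∑ j ∈ range (i+1), n.choose j) + 2^E1 * ∑ j ∈ range i, n.choose j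
            < 2^r * ∑ j ∈ range (i+1), (n-r).choose j := by
          have t1 : 2^(r-1) * (∑ j ∈ range (i+1), n.choose j)
              ≤ 2^(r-1) * (i*X) + 2^(r-1) * a + 2^(r-1) * (r*X) := by
            rw [hSB]
            calc 2^(r-1) * (∑ j ∈ range i, n.choose j + n.choose i)
                = 2^(r-1) * ∑ j ∈ range i, n.choose j + 2^(r-1) * n.choose i := by ring
              _ ≤ 2^(r-1) * (i*X) + 2^(r-1) * (a + r*X) := by
                  have u1 := Nat.mul_le_mul_left (2^(r-1)) hSL
                  have u2 := Nat.mul_le_mul_left (2^(r-1)) hCC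
                  omega
              _ = 2^(r-1) * (i*X) + 2^(r-1) * a + 2^(r-1) * (r*X) := by ring
          have t2 : 2^E1 * ∑ j ∈ range i, n.choose j ≤ 2^E1 * (i*X) :=
            Nat.mul_le_mul_left _ hSL
          have t3 : 2^(r-1) * (i*X) + 2^(r-1) * (r*X) + 2^E1 * (i*X)
              = (2^(r-1)*i + 2^(r-1)*r + 2^E1*i) * X := by ring
          have t4 : a ≤ ∑ j ∈ range (i+1), (n-r).choose j := hSRge
          have t5 : 2^r = 2^(r-1) * 2 := by
            rw [← pow_succ]
            congr 1
            omega
          have t6 : 2^(r-1) * a + a ≤ 2^r * ∑ j ∈ range (i+1), (n-r).choose j := by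
            have u3 : 1 ≤ 2^(r-1) := Nat.one_le_two_pow
            have u4 : 2^(r-1) * a + a ≤ 2^(r-1) * a + 2^(r-1) * a := by
              have := Nat.mul_le_mul_right a u3
              omega
            have u5 : 2^(r-1) * a + 2^(r-1) * a = 2^r * a := by rw [t5]; ring
            have u6 : 2^r * a ≤ 2^r * ∑ j ∈ range (i+1), (n-r).choose j :=
              Nat.mul_le_mul_left _ t4
            omega
          omega
        exact hfin
    omega
  have hstruct : ∀ S₀ ∈ A, (S₀ \ R).card ≤ i := by
    intro S₀ hS₀
    by_contra hbad
    push_neg at hbad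
    obtain ⟨Z₀, hZ₀⟩ := hbig_ex
    have hp'r : (R \ S₀).card ≤ r := by
      rw [← hRr2]
      exact Finset.card_le_card Finset.sdiff_subset
    set e := (R \ S₀).equivFin with hedef
    set g : Fin k' → Finset (Fin n) := fun t =>
      if h : (t:ℕ) < (R \ S₀).card then fZ ↑(e.symm ⟨t, h⟩) else Z₀ with hgdef
    have hg : ∀ t, g t ∈ bigs := by
      intro t
      rw [hgdef]
      dsimp only
      split_ifs with h
      · exact (hfZ _ (Finset.mem_sdiff.1 (e.symm ⟨t, h⟩).2).1).1
      · exact hZ₀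
    obtain ⟨f, hf1, hf2⟩ := chain k' (by omega) g hg (W ∪ S₀) (by
      have h1 := Finset.card_union_le W S₀
      have h2 := hsize S₀ hS₀
      have h3 : (k-1)*d ≤ k*d := Nat.mul_le_mul_right d (by omega)
      have h4 : (k+1)*d = k*d + d := by ring
      omega)
    set U := Finset.univ.sup f with hUdef
    have hRS : R \ S₀ ⊆ U := by
      intro x hx
      have hxR : x ∈ R := (Finset.mem_sdiff.1 hx).1
      set t₀ := e ⟨x, hx⟩ with ht₀def
      have ht₀2 : (t₀ : ℕ) < (R \ S₀).card := t₀.2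
      have hkk : (t₀ : ℕ) < k' := by omega
      have hmem : x ∈ g ⟨t₀, hkk⟩ := by
        rw [hgdef]
        dsimp only
        rw [dif_pos (show ((⟨(t₀:ℕ), hkk⟩ : Fin k') : ℕ) < (R \ S₀).card from ht₀2)]
        have hfix : (⟨((⟨(t₀:ℕ), hkk⟩ : Fin k') : ℕ), ht₀2⟩ : Fin (R \ S₀).card) = t₀ :=
          Fin.ext rfl
        rw [hfix, ht₀def, Equiv.symm_apply_apply]
        exact (hfZ x hxR).2
      have hgf := (hf1 ⟨(t₀:ℕ), hkk⟩).2
      have hxf : x ∈ f ⟨(t₀:ℕ), hkk⟩ := by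
        rw [← hgf] at hmem
        exact (Finset.mem_inter.1 hmem).1
      have hsubf : f ⟨(t₀:ℕ), hkk⟩ ⊆ U :=
        Finset.le_sup (Finset.mem_univ _)
      exact hsubf hxf
    set h' : Fin k → Finset (Fin n) := Fin.cons S₀ f with hh'def
    have hmem' : ∀ t, h' t ∈ A := by
      intro t
      rw [hh'def]
      refine Fin.cases ?_ ?_ t
      · rw [Fin.cons_zero]; exact hS₀
      · intro j; rw [Fin.cons_succ]; exact (hf1 j).1
    have hduniv := hA h' hmem'
    have hsup : Finset.univ.sup h' = S₀ ⊔ U := sup_univ_cons' S₀ f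
    rw [hsup, Finset.sup_eq_union] at hduniv
    have hpieces : S₀ ∪ (R \ S₀) ∪ (U \ (W ∪ S₀)) ⊆ S₀ ∪ U := by
      intro x hx
      rcases Finset.mem_union.1 hx with hx | hx
      · rcases Finset.mem_union.1 hx with hx | hx
        · exact Finset.mem_union_left _ hx
        · exact Finset.mem_union_right _ (hRS hx)
      · exact Finset.mem_union_right _ (Finset.mem_sdiff.1 hx).1
    have hd1 : Disjoint S₀ (R \ S₀) := Finset.disjoint_sdiff
    have hd2 : Disjoint (S₀ ∪ (R \ S₀)) (U \ (W ∪ S₀)) := by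
      apply Finset.disjoint_left.2
      intro x hx1 hx2
      rw [Finset.mem_sdiff] at hx2
      rcases Finset.mem_union.1 hx1 with h | h
      · exact hx2.2 (Finset.mem_union_right _ h)
      · exact hx2.2 (Finset.mem_union_left _ (hRW (Finset.mem_sdiff.1 h).1))
    have hcards := Finset.card_le_card hpieces
    rw [Finset.card_union_of_disjoint hd2, Finset.card_union_of_disjoint hd1] at hcards
    have hS₀split := Finset.card_inter_add_card_sdiff S₀ R
    have hRsplit := Finset.card_inter_add_card_sdiff R S₀
    rw [hRr2] at hRsplit
    have hIC : (S₀ ∩ R).card = (R ∩ S₀).card := by rw [Finset.inter_comm]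
    have hkimul : k * i = k' * i + i := by rw [hkdef]; ring
    have hcardU := Finset.card_le_card hpieces
    omega
  -- A is exactly the ball family around R
  have hAeq : A = Finset.univ.filter (fun S => (S \ R).card ≤ i) := by
    have hball := card_ball R i
    rw [Fintype.card_fin, hRr2] at hball
    have hsub : A ⊆ Finset.univ.filter (fun S => (S \ R).card ≤ i) :=
      fun S hS => Finset.mem_filter.2 ⟨Finset.mem_univ _, hstruct S hS⟩
    exact Finset.eq_of_subset_of_card_le hsub (by rw [hball, hcard])
  -- build permutation sending R to the top r coordinates
  set lastR := Finset.univ.filter (fun x : Fin n => n - r ≤ (x:ℕ)) with hlastdef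
  have hfirst : (Finset.univ.filter (fun x : Fin n => (x:ℕ) < n - r)).card = n - r := by
    have hmap : ((Finset.univ : Finset (Fin (n-r))).map (Fin.castLEEmb (by omega)))
        = Finset.univ.filter (fun x : Fin n => (x:ℕ) < n - r) := by
      ext x
      constructor
      · intro hx
        obtain ⟨y, -, rfl⟩ := Finset.mem_map.1 hx
        simp only [Finset.mem_filter, Finset.mem_univ, true_and]
        exact y.2
      · intro hx
        have hx' : (x:ℕ) < n - r := (Finset.mem_filter.1 hx).2
        exact Finset.mem_map.2 ⟨⟨(x:ℕ), hx'⟩, Finset.mem_univ _, rfl⟩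
    rw [← hmap, Finset.card_map, Finset.card_univ, Fintype.card_fin]
  have hlastcard : lastR.card = r := by
    have hcompl : lastR = Finset.univ \ Finset.univ.filter (fun x : Fin n => (x:ℕ) < n - r) := by
      rw [hlastdef]
      ext x
      simp only [Finset.mem_filter, Finset.mem_univ, true_and, Finset.mem_sdiff]
      omega
    rw [hcompl, Finset.card_sdiff_of_subset (Finset.filter_subset _ _), Finset.card_univ,
      Fintype.card_fin, hfirst]
    omega
  have hc1 : Fintype.card {x // x ∈ R} = Fintype.card {x // x ∈ lastR} := by
    rw [Fintype.card_coe, Fintype.card_coe, hRr2, hlastcard]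
  have hc2 : Fintype.card {x : Fin n // ¬ x ∈ R} = Fintype.card {x : Fin n // ¬ x ∈ lastR} := by
    rw [Fintype.card_subtype_compl, Fintype.card_subtype_compl, hc1]
  set e₁ := Fintype.equivOfCardEq hc1 with he₁def
  set e₂ := Fintype.equivOfCardEq hc2 with he₂def
  set σ : Equiv.Perm (Fin n) := Equiv.subtypeCongr e₁ e₂ with hσdef
  have hσmem : ∀ x, σ x ∈ lastR ↔ x ∈ R := by
    intro x
    by_cases hx : x ∈ R
    · have hval : σ x = ↑(e₁ ⟨x, hx⟩) := by
        rw [hσdef]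
        unfold Equiv.subtypeCongr
        simp [Equiv.sumCompl_symm_apply_of_pos hx]
      rw [hval]
      exact iff_of_true (e₁ ⟨x, hx⟩).2 hx
    · have hval : σ x = ↑(e₂ ⟨x, hx⟩) := by
        rw [hσdef]
        unfold Equiv.subtypeCongr
        simp [Equiv.sumCompl_symm_apply_of_neg hx]
      rw [hval]
      constructor
      · intro hmem
        exact absurd hmem (e₂ ⟨x, hx⟩).2
      · intro hmem
        exact absurd hmem hx
  have hRimg : R.image σ = lastR := by
    ext y
    simp only [Finset.mem_image]
    constructor
    · rintro ⟨x, hx, rfl⟩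
      exact (hσmem x).2 hx
    · intro hy
      refine ⟨σ.symm y, ?_, σ.apply_symm_apply y⟩
      have := hσmem (σ.symm y)
      rw [σ.apply_symm_apply] at this
      exact this.1 hy
  refine ⟨σ, ?_⟩
  rw [hAeq]
  ext T
  simp only [Finset.mem_image, Finset.mem_filter, Finset.mem_univ, true_and]
  have hTkey : ∀ T : Finset (Fin n),
      T.filter (fun x : Fin n => (x:ℕ) < n - r) = T \ lastR := by
    intro T
    ext x
    simp only [Finset.mem_filter, Finset.mem_sdiff, hlastdef, Finset.mem_univ, true_and]
    constructor
    · exact fun ⟨h1, h2⟩ => ⟨h1, by omega⟩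
    · exact fun ⟨h1, h2⟩ => ⟨h1, by omega⟩
  constructor
  · rintro ⟨S, hS, rfl⟩
    rw [hTkey, ← hRimg, ← Finset.image_sdiff]
    · rw [Finset.card_image_of_injective _ σ.injective]
      exact hS
    · exact σ.injective
  · intro hT
    refine ⟨T.image σ.symm, ?_, ?_⟩
    · have hR' : R = lastR.image σ.symm := by
        rw [← hRimg, Finset.image_image]
        have : (⇑σ.symm ∘ ⇑σ) = id := by
          funext x
          simp
        rw [this, Finset.image_id]
      rw [hR', ← Finset.image_sdiff _ _ σ.symm.injective,
        Finset.card_image_of_injective _ σ.symm.injective, ← hTkey]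
      exact hT
    · rw [Finset.image_image]
      have : (⇑σ ∘ ⇑σ.symm) = id := by
        funext x
        simp
      rw [this, Finset.image_id]
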